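/- arXiv:2303.15815 — 11 statements merged into one kernel-verified Lean document; each statement's English description precedes it below -/
import Mathlib

section
/- If σ is a non-identity permutation of {1,...,n}, then any quandle isomorphism f: P_n^σ → P_n^τ satisfies f(0) = 0. -/
/-- The operation of `P_n^σ` on `{0,1,...,n}`: `x*y = x` if `y ≠ 0`, `x*0 = σ x`
(with `σ` a permutation fixing `0`, encoding a permutation of `{1,...,n}`). -/
def pOp {n : ℕ} (σ : Equiv.Perm (Fin (n + 1))) (x y : Fin (n + 1)) : Fin (n + 1) :=
  if y = 0 then σ x else x

/-- If `σ ≠ id`, any quandle isomorphism `f : P_n^σ → P_n^τ` fixes `0`. -/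
theorem iso_fixes_zero {n : ℕ} (σ τ : Equiv.Perm (Fin (n + 1)))
    (hσ0 : σ 0 = 0) (hτ0 : τ 0 = 0) (hσ : σ ≠ 1)
    (f : Fin (n + 1) ≃ Fin (n + 1))
    (hf : ∀ x y, f (pOp σ x y) = pOp τ (f x) (f y)) :
    f 0 = 0 := by
  by_contra h
  -- let y be the preimage of 0; y ≠ 0 since f 0 ≠ 0
  have hy : f (f.symm 0) = 0 := f.apply_symm_apply 0
  have hy0 : f.symm 0 ≠ 0 := by
    intro e
    rw [e] at hy
    exact h hy
  -- then for all x, f (σ x) = f x, so σ = 1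
  apply hσ
  apply Equiv.ext
  intro x
  have := hf x 0
  simp only [pOp, if_pos, if_neg h] at this
  simpa using f.injective this
end

section
/- For permutations σ, τ of {1,...,n}, the quandles P_n^σ and P_n^τ are isomorphic if and only if σ and τ are conjugate in the symmetric group S_n. -/
/-- `P_n^σ ≅ P_n^τ` iff `σ` and `τ` are conjugate in `S_n` (conjugating
permutations of `{1,...,n}` are encoded as permutations of `{0,...,n}` fixing `0`). -/
theorem pn_iso_iff_conjugate {n : ℕ} (σ τ : Equiv.Perm (Fin (n + 1)))
    (hσ0 : σ 0 = 0) (hτ0 : τ 0 = 0) :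
    (∃ f : Fin (n + 1) ≃ Fin (n + 1),
        ∀ x y, f (pOp σ x y) = pOp τ (f x) (f y)) ↔
    (∃ h : Equiv.Perm (Fin (n + 1)), h 0 = 0 ∧ σ = h⁻¹ * τ * h) := by
  constructor
  · rintro ⟨f, hf⟩
    by_cases hf0 : f 0 = 0
    · refine ⟨f, hf0, ?_⟩
      ext x
      have h1 := hf x 0
      simp [pOp, hf0] at h1
      simp [Equiv.Perm.mul_apply, ← h1]
    · have hσ : σ = 1 := by
        ext x
        have h1 := hf x 0
        simp [pOp, hf0] at h1
        simp [h1]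
      have hτ : τ = 1 := by
        ext x
        have hy : f.symm 0 ≠ 0 := fun hc => hf0 (by
          have := congrArg f hc
          simpa using this.symm)
        have h1 := hf (f.symm x) (f.symm 0)
        simp [pOp, hy] at h1
        simp only [Equiv.Perm.one_apply]
        omega
      exact ⟨1, by simp, by simp [hσ, hτ]⟩
  · rintro ⟨h, h0, rfl⟩
    refine ⟨h, fun x y => ?_⟩
    by_cases hy : y = 0
    · subst hy
      simp [pOp, h0, Equiv.Perm.mul_apply]
    · have hhy : h y ≠ 0 := fun hc => hy (h.injective (hc.trans h0.symm))
      simp [pOp, hy, hhy]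
end

section
/- If σ ≠ id is a permutation of {1,...,n}, then the automorphism group of the quandle P_n^σ is isomorphic to the centralizer of σ in the symmetric group S_n. -/
/-- The automorphism group of the quandle `P_n^σ`: bijective quandle endomorphisms. -/
def pAut {n : ℕ} (σ : Equiv.Perm (Fin (n + 1))) : Subgroup (Equiv.Perm (Fin (n + 1))) where
  carrier := {f | ∀ x y, f (pOp σ x y) = pOp σ (f x) (f y)}
  one_mem' := fun _ _ => rfl
  mul_mem' := by
    intro f g hf hg x y
    simp only [Equiv.Perm.coe_mul, Function.comp_apply]
    rw [hg, hf]
  inv_mem' := by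
    intro f hf x y
    apply f.injective
    rw [hf (f⁻¹ x) (f⁻¹ y)]
    simp
/-- The centralizer `C_{S_n}(σ)`, encoded as the permutations of `{0,...,n}`
fixing `0` and commuting with `σ`. -/
def pCent {n : ℕ} (σ : Equiv.Perm (Fin (n + 1))) : Subgroup (Equiv.Perm (Fin (n + 1))) where
  carrier := {g | g 0 = 0 ∧ g * σ = σ * g}
  one_mem' := ⟨rfl, by group⟩
  mul_mem' := by
    rintro f g ⟨hf0, hfc⟩ ⟨hg0, hgc⟩
    refine ⟨by simp [Equiv.Perm.coe_mul, hg0, hf0], ?_⟩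
    rw [mul_assoc, hgc, ← mul_assoc, hfc, mul_assoc]
  inv_mem' := by
    rintro f ⟨hf0, hfc⟩
    refine ⟨?_, (show Commute f σ from hfc).inv_left⟩
    apply f.injective
    simp [hf0]

/-- For `σ ≠ id`, `Aut(P_n^σ) ≅ C_{S_n}(σ)`. -/
theorem aut_iso_centralizer {n : ℕ} (σ : Equiv.Perm (Fin (n + 1)))
    (hσ0 : σ 0 = 0) (hσ : σ ≠ 1) :
    Nonempty (pAut σ ≃* pCent σ) := by
  have heq : pAut σ = pCent σ := by
    ext f
    constructor
    · intro hf
      have h0 : f 0 = 0 := by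
        by_contra h
        have hy : f⁻¹ 0 ≠ 0 := by
          intro h'
          apply h
          have := congrArg f h'
          simpa using this.symm
        have key : ∀ x, f x = σ (f x) := by
          intro x
          have := hf x (f⁻¹ 0)
          simp only [pOp, if_neg hy, show f (f⁻¹ 0) = 0 by simp, if_pos rfl] at this
          exact this
        apply hσ
        apply Equiv.ext
        intro z
        have := key (f⁻¹ z)
        simpa using this.symm
      refine ⟨h0, ?_⟩
      apply Equiv.ext
      intro x
      have := hf x 0
      simp only [pOp, if_pos rfl, h0] at this
      simpa using this
    · rintro ⟨h0, hc⟩ x y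
      by_cases hy : y = 0
      · subst hy
        simp only [pOp, if_pos rfl, h0]
        have := DFunLike.congr_fun hc x
        simpa using this
      · have hfy : f y ≠ 0 := by
          intro h
          exact hy (f.injective (h.trans h0.symm))
        simp [pOp, hy, hfy]
  exact ⟨MulEquiv.subgroupCongr heq⟩
end

section
/- If σ ≠ id is a permutation of {1,...,n}, then the inner automorphism group of the quandle P_n^σ is cyclic of order equal to the order of σ. -/
/-- The inner automorphism group of `P_n^σ`: the subgroup of permutations generated by
the right translations `S_y(x) = x*y`. -/
def pInn {n : ℕ} (σ : Equiv.Perm (Fin (n + 1))) : Subgroup (Equiv.Perm (Fin (n + 1))) :=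
  Subgroup.closure {f : Equiv.Perm (Fin (n + 1)) | ∃ y, ∀ x, f x = pOp σ x y}

theorem pInn_eq {n : ℕ} (σ : Equiv.Perm (Fin (n + 1))) :
    pInn σ = Subgroup.zpowers σ := by
  apply le_antisymm
  · rw [pInn, Subgroup.closure_le]
    rintro f ⟨y, hy⟩
    by_cases h : y = 0
    · have : f = σ := by
        ext x; rw [hy x, pOp, if_pos h]
      rw [this]; exact Subgroup.mem_zpowers σ
    · have : f = 1 := by
        ext x; rw [hy x, pOp, if_neg h]; rfl
      rw [this]; exact (Subgroup.zpowers σ).one_mem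
  · rw [Subgroup.zpowers_le]
    apply Subgroup.subset_closure
    exact ⟨0, fun x => by rw [pOp, if_pos rfl]⟩

/-- For `σ ≠ id`, `Inn(P_n^σ)` is cyclic of order equal to the order of `σ`. -/
theorem inn_cyclic_order {n : ℕ} (σ : Equiv.Perm (Fin (n + 1)))
    (hσ0 : σ 0 = 0) (hσ : σ ≠ 1) :
    IsCyclic (pInn σ) ∧ Nat.card (pInn σ) = orderOf σ := by
  rw [pInn_eq]
  refine ⟨⟨⟨⟨σ, Subgroup.mem_zpowers σ⟩, ?_⟩⟩, Nat.card_zpowers σ⟩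
  rintro ⟨g, k, hk⟩
  exact ⟨k, Subtype.ext (by simpa using hk)⟩
end

section
/- Let σ be a non-identity permutation of {1,...,n} fixing exactly α elements. The quandle polynomial of P_n^σ equals α·s^{n+1}t^{n+1} + (n−α)·s^n t^{n+1} + s^{n+1}t^{1+α}. -/
/-- The quandle polynomial of `P_n^σ`, for `σ ≠ id` with `α` fixed points among
`{1,...,n}`, is `α s^{n+1}t^{n+1} + (n-α) s^n t^{n+1} + s^{n+1} t^{1+α}`
(stated via evaluation at arbitrary elements of a commutative semiring). -/
theorem quandle_polynomial_pn {n : ℕ} (σ : Equiv.Perm (Fin (n + 1)))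
    (hσ0 : σ 0 = 0) (hσ : σ ≠ 1)
    (α : ℕ) (hα : α = Fintype.card {x : Fin (n + 1) // x ≠ 0 ∧ σ x = x})
    (R : Type) [CommSemiring R] (s t : R) :
    ∑ x : Fin (n + 1),
        s ^ (Fintype.card {y : Fin (n + 1) // pOp σ x y = x}) *
          t ^ (Fintype.card {y : Fin (n + 1) // pOp σ y x = y}) =
      (α : R) * s ^ (n + 1) * t ^ (n + 1) +
        ((n - α : ℕ) : R) * s ^ n * t ^ (n + 1) +
        s ^ (n + 1) * t ^ (1 + α) := by
  classical
  -- r(x)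
  have hr : ∀ x : Fin (n+1),
      Fintype.card {y : Fin (n+1) // pOp σ x y = x} = if σ x = x then n + 1 else n := by
    intro x
    rw [Fintype.card_subtype]
    by_cases h : σ x = x
    · rw [if_pos h, Finset.filter_true_of_mem, Finset.card_univ, Fintype.card_fin]
      intro y _
      unfold pOp
      split <;> simp [h]
    · rw [if_neg h]
      have e : (Finset.univ.filter fun y => pOp σ x y = x)
          = Finset.univ.filter fun y : Fin (n+1) => y ≠ 0 := by
        ext y
        simp only [Finset.mem_filter, Finset.mem_univ, true_and, pOp]
        by_cases hy : y = 0 <;> simp [hy, h]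
      rw [e, Finset.filter_ne', Finset.card_erase_of_mem (Finset.mem_univ _),
        Finset.card_univ, Fintype.card_fin]
      omega
  -- c(x) for x ≠ 0
  have hc : ∀ x : Fin (n+1), x ≠ 0 →
      Fintype.card {y : Fin (n+1) // pOp σ y x = y} = n + 1 := by
    intro x hx
    rw [Fintype.card_subtype, Finset.filter_true_of_mem, Finset.card_univ, Fintype.card_fin]
    intro y _; simp [pOp, hx]
  -- c(0)
  have hc0 : Fintype.card {y : Fin (n+1) // pOp σ y 0 = y} = 1 + α := by
    have e : (Finset.univ.filter fun y : Fin (n+1) => pOp σ y 0 = y)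
        = insert 0 (Finset.univ.filter fun y : Fin (n+1) => y ≠ 0 ∧ σ y = y) := by
      ext y
      simp only [Finset.mem_filter, Finset.mem_univ, true_and, Finset.mem_insert, pOp,
        if_pos rfl]
      constructor
      · intro h
        by_cases hy : y = 0
        · exact Or.inl hy
        · exact Or.inr ⟨hy, h⟩
      · rintro (rfl | ⟨_, h⟩)
        · exact hσ0
        · exact h
    rw [Fintype.card_subtype, e, Finset.card_insert_of_notMem (by simp), hα,
      Fintype.card_subtype]
    omega
  -- split off x = 0
  rw [← Finset.sum_erase_add _ _ (Finset.mem_univ (0 : Fin (n+1)))]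
  have h0 : s ^ (Fintype.card {y : Fin (n+1) // pOp σ 0 y = 0}) *
      t ^ (Fintype.card {y : Fin (n+1) // pOp σ y 0 = y}) = s ^ (n+1) * t ^ (1 + α) := by
    rw [hr 0, if_pos hσ0, hc0]
  rw [h0]
  congr 1
  -- sum over x ≠ 0
  have hrest : ∀ x ∈ Finset.univ.erase (0 : Fin (n+1)),
      s ^ (Fintype.card {y : Fin (n+1) // pOp σ x y = x}) *
        t ^ (Fintype.card {y : Fin (n+1) // pOp σ y x = y}) =
      (if σ x = x then s ^ (n+1) else s ^ n) * t ^ (n+1) := by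
    intro x hx
    rw [Finset.mem_erase] at hx
    rw [hr x, hc x hx.1]
    split <;> rfl
  rw [Finset.sum_congr rfl hrest,
    ← Finset.sum_filter_add_sum_filter_not (Finset.univ.erase 0) (fun x => σ x = x)]
  have hfix : (Finset.filter (fun x => σ x = x) (Finset.univ.erase (0 : Fin (n+1)))).card
      = α := by
    rw [hα, Fintype.card_subtype]
    congr 1
    ext x
    simp [Finset.mem_erase, and_comm]
  have htot : (Finset.univ.erase (0 : Fin (n+1))).card = n := by
    rw [Finset.card_erase_of_mem (Finset.mem_univ _), Finset.card_univ, Fintype.card_fin]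
    omega
  have hnfix : (Finset.filter (fun x => ¬ σ x = x) (Finset.univ.erase (0 : Fin (n+1)))).card
      = n - α := by
    have := Finset.card_filter_add_card_filter_not
      (s := Finset.univ.erase (0 : Fin (n+1))) (p := fun x => σ x = x)
    omega
  have h1 : ∑ x ∈ Finset.filter (fun x => σ x = x) (Finset.univ.erase (0 : Fin (n+1))),
      (if σ x = x then s ^ (n+1) else s ^ n) * t ^ (n+1) = α • (s ^ (n+1) * t ^ (n+1)) := by
    rw [Finset.sum_congr rfl (fun x hx => by rw [if_pos (Finset.mem_filter.mp hx).2]),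
      Finset.sum_const, hfix]
  have h2 : ∑ x ∈ Finset.filter (fun x => ¬ σ x = x) (Finset.univ.erase (0 : Fin (n+1))),
      (if σ x = x then s ^ (n+1) else s ^ n) * t ^ (n+1) = (n - α) • (s ^ n * t ^ (n+1)) := by
    rw [Finset.sum_congr rfl (fun x hx => by rw [if_neg (Finset.mem_filter.mp hx).2]),
      Finset.sum_const, hnfix]
  rw [h1, h2, nsmul_eq_mul, nsmul_eq_mul]
  ring
end

section
/- Let σ be an n-cycle on {1,...,n} with n ≥ 2. If a quandle homomorphism f: P_n^σ → P_n^σ satisfies f(k) = 0 for some k ≠ 0, then f is the zero map (f(x) = 0 for all x). -/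
/-- If `σ` is an `n`-cycle on `{1,...,n}` (`n ≥ 2`) and a quandle endomorphism `f`
of `P_n^σ` sends some `k ≠ 0` to `0`, then `f` is the zero map. -/
theorem hom_zero_of_positive_zero {n : ℕ} (hn : 2 ≤ n)
    (σ : Equiv.Perm (Fin (n + 1))) (hσ0 : σ 0 = 0)
    (hcyc : σ.IsCycle) (hmove : ∀ x : Fin (n + 1), x ≠ 0 → σ x ≠ x)
    (f : Fin (n + 1) → Fin (n + 1))
    (hf : ∀ x y, f (pOp σ x y) = pOp σ (f x) (f y))
    (k : Fin (n + 1)) (hk : k ≠ 0) (hfk : f k = 0) :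
    ∀ x, f x = 0 := by
  intro x
  have h := hf x k
  rw [hfk] at h
  simp only [pOp, if_pos rfl, if_neg hk] at h
  by_contra hx
  exact hmove (f x) hx h.symm
end

section
/- Let σ be an n-cycle on {1,...,n}. Every quandle endomorphism f of P_n^σ is determined by the pair (f(0), f(1)); moreover if f(0) ≠ 0 and f is not the zero map, then f(1) = f(2) = ... = f(n). -/
lemma zpow_comm_fun {α : Type*} (σ : Equiv.Perm α) (f : α → α)
    (h : ∀ x, f (σ x) = σ (f x)) (k : ℤ) (x : α) :
    f ((σ ^ k) x) = (σ ^ k) (f x) := by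
  have hinv : ∀ x, f (σ⁻¹ x) = σ⁻¹ (f x) := by
    intro x
    have := h (σ⁻¹ x)
    rw [show ∀ y, σ (σ⁻¹ y) = y from σ.apply_symm_apply] at this
    apply σ.injective
    rw [show ∀ y, σ (σ⁻¹ y) = y from σ.apply_symm_apply, this]
  induction k using Int.induction_on generalizing x with
  | zero => simp
  | succ k ih =>
    rw [zpow_add_one]
    simp only [Equiv.Perm.mul_apply]
    rw [ih (σ x), h]
  | pred k ih =>
    rw [zpow_sub_one]
    simp only [Equiv.Perm.mul_apply]
    rw [ih (σ⁻¹ x), hinv]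

lemma zpow_const_fun {α : Type*} (σ : Equiv.Perm α) (f : α → α)
    (h : ∀ x, f (σ x) = f x) (k : ℤ) (x : α) :
    f ((σ ^ k) x) = f x := by
  have hinv : ∀ x, f (σ⁻¹ x) = f x := by
    intro x
    have := h (σ⁻¹ x)
    rw [show ∀ y, σ (σ⁻¹ y) = y from σ.apply_symm_apply] at this
    exact this.symm
  induction k using Int.induction_on generalizing x with
  | zero => simp
  | succ k ih =>
    rw [zpow_add_one]
    simp only [Equiv.Perm.mul_apply]
    rw [ih (σ x), h]
  | pred k ih =>
    rw [zpow_sub_one]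
    simp only [Equiv.Perm.mul_apply]
    rw [ih (σ⁻¹ x), hinv]

/-- For an `n`-cycle `σ` on `{1,...,n}`, every quandle endomorphism of `P_n^σ` is
determined by the pair `(f 0, f 1)`; and if `f 0 ≠ 0` and `f` is not the zero map,
then `f` is constant on `{1,...,n}`. -/
theorem endo_determined {n : ℕ} (hn : 1 ≤ n)
    (σ : Equiv.Perm (Fin (n + 1))) (hσ0 : σ 0 = 0)
    (hcyc : σ.IsCycle) (hmove : ∀ x : Fin (n + 1), x ≠ 0 → σ x ≠ x) :
    (∀ f g : Fin (n + 1) → Fin (n + 1),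
        (∀ x y, f (pOp σ x y) = pOp σ (f x) (f y)) →
        (∀ x y, g (pOp σ x y) = pOp σ (g x) (g y)) →
        f 0 = g 0 → f 1 = g 1 → f = g) ∧
    (∀ f : Fin (n + 1) → Fin (n + 1),
        (∀ x y, f (pOp σ x y) = pOp σ (f x) (f y)) →
        f 0 ≠ 0 → (∃ x, f x ≠ 0) →
        ∀ x y : Fin (n + 1), x ≠ 0 → y ≠ 0 → f x = f y) := by
  have h1ne0 : (1 : Fin (n + 1)) ≠ 0 := by
    intro h
    have h2 : (1 : Fin (n + 1)).val = (0 : Fin (n + 1)).val := congrArg Fin.val h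
    rw [Fin.val_one', Fin.val_zero, Nat.mod_eq_of_lt (by omega)] at h2
    omega
  -- same-cycle fact
  have hsc : ∀ x y : Fin (n + 1), x ≠ 0 → y ≠ 0 → ∃ k : ℤ, (σ ^ k) x = y := by
    intro x y hx hy
    exact hcyc.sameCycle (hmove x hx) (hmove y hy)
  constructor
  · intro f g hf hg h0 h1
    by_cases hf0 : f 0 = 0
    · have hg0 : g 0 = 0 := h0 ▸ hf0
      have hfc : ∀ x, f (σ x) = σ (f x) := by
        intro x
        have := hf x 0
        simpa [pOp, hf0] using this
      have hgc : ∀ x, g (σ x) = σ (g x) := by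
        intro x
        have := hg x 0
        simpa [pOp, hg0] using this
      funext x
      by_cases hx : x = 0
      · rw [hx]; exact h0
      · obtain ⟨k, hk⟩ := hsc 1 x h1ne0 hx
        rw [← hk, zpow_comm_fun σ f hfc, zpow_comm_fun σ g hgc, h1]
    · have hg0 : g 0 ≠ 0 := fun h => hf0 (h0.trans h)
      have hfc : ∀ x, f (σ x) = f x := by
        intro x
        have := hf x 0
        simpa [pOp, hf0] using this
      have hgc : ∀ x, g (σ x) = g x := by
        intro x
        have := hg x 0
        simpa [pOp, hg0] using this
      funext x
      by_cases hx : x = 0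
      · rw [hx]; exact h0
      · obtain ⟨k, hk⟩ := hsc 1 x h1ne0 hx
        rw [← hk, zpow_const_fun σ f hfc, zpow_const_fun σ g hgc, h1]
  · intro f hf hf0 _ x y hx hy
    have hfc : ∀ z, f (σ z) = f z := by
      intro z
      have := hf z 0
      simpa [pOp, hf0] using this
    obtain ⟨k, hk⟩ := hsc x y hx hy
    rw [← hk, zpow_const_fun σ f hfc]
end

section
/- Let σ be a permutation of {1,...,n}. A function C: P_n^σ × P_n^σ → A (A an abelian group) satisfies the quandle 2-cocycle condition C(p,r) + C(p*r, q*r) = C(p,q) + C(p*q, r) for all p,q,r if and only if for all nonzero p,q,r: C(0,σ(q)) = C(0,q), C(σ(p),σ(q)) = C(p,q), and C(σ(p),r) = C(p,r). -/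
/-- A function `C` on `P_n^σ × P_n^σ` with values in an abelian group satisfies the
quandle 2-cocycle condition iff it satisfies the three relations
`C(0,σq) = C(0,q)`, `C(σp,σq) = C(p,q)`, `C(σp,r) = C(p,r)` for nonzero `p,q,r`. -/
theorem cocycle_condition_iff {n : ℕ} (σ : Equiv.Perm (Fin (n + 1))) (hσ0 : σ 0 = 0)
    (A : Type) [AddCommGroup A] (C : Fin (n + 1) → Fin (n + 1) → A) :
    (∀ p q r : Fin (n + 1),
        C p r + C (pOp σ p r) (pOp σ q r) = C p q + C (pOp σ p q) r) ↔
    (∀ p q r : Fin (n + 1), p ≠ 0 → q ≠ 0 → r ≠ 0 →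
        C 0 (σ q) = C 0 q ∧ C (σ p) (σ q) = C p q ∧ C (σ p) r = C p r) := by
  constructor
  · intro h p q r hp hq hr
    have h2 : ∀ p' q' : Fin (n + 1), q' ≠ 0 → C (σ p') (σ q') = C p' q' := by
      intro p' q' hq'
      have H := h p' q' 0
      simp only [pOp, if_pos rfl, if_true, if_neg hq'] at H
      rw [add_comm (C p' q')] at H
      exact add_left_cancel H
    have h3 : ∀ p' r' : Fin (n + 1), r' ≠ 0 → C (σ p') r' = C p' r' := by
      intro p' r' hr'
      have H := h p' 0 r'
      simp only [pOp, if_pos rfl, if_true, if_neg hr', hσ0] at H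
      rw [add_comm (C p' r')] at H
      exact (add_left_cancel H).symm
    refine ⟨?_, h2 p q hq, h3 p r hr⟩
    have := h2 0 q hq
    rwa [hσ0] at this
  · intro h p q r
    by_cases hq : q = 0 <;> by_cases hr : r = 0
    · subst hq; subst hr
      simp [pOp, hσ0]
    · subst hq
      simp only [pOp, if_pos rfl, if_true, if_neg hr]
      by_cases hp : p = 0
      · subst hp; rw [hσ0]; abel
      · rw [(h p r r hp hr hr).2.2]; abel
    · subst hr
      simp only [pOp, if_pos rfl, if_true, if_neg hq]
      by_cases hp : p = 0
      · subst hp; rw [hσ0, (h q q q hq hq hq).1]; abel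
      · rw [(h p q q hp hq hq).2.1]; abel
    · simp only [pOp, if_neg hq, if_neg hr]
      abel
end

section
/- Let σ be a permutation of {1,...,n} that is not an involution (σ² ≠ id). Then the quandle P_n^σ admits no good involution. -/
/-- The dual operation `x ¯* y` of `P_n^σ`: the unique `z` with `z*y = x`. -/
def pInvOp {n : ℕ} (σ : Equiv.Perm (Fin (n + 1))) (x y : Fin (n + 1)) : Fin (n + 1) :=
  if y = 0 then σ⁻¹ x else x

/-- If `σ` is not an involution, then `P_n^σ` has no good involution. -/
theorem no_good_involution {n : ℕ} (σ : Equiv.Perm (Fin (n + 1)))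
    (hσ0 : σ 0 = 0) (hσ : σ * σ ≠ 1) :
    ¬ ∃ ρ : Fin (n + 1) → Fin (n + 1), Function.Involutive ρ ∧
        (∀ x y, ρ (pOp σ x y) = pOp σ (ρ x) y) ∧
        (∀ x y, pOp σ x (ρ y) = pInvOp σ x y) := by
  rintro ⟨ρ, -, -, h2⟩
  have hρ0 : ρ 0 = 0 := by
    by_contra h
    have hid : σ = 1 := by
      apply Equiv.ext; intro x
      have hx : x = σ⁻¹ x := by simpa [pOp, pInvOp, h] using h2 x 0
      show σ x = x
      conv_lhs => rw [hx]
      simp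
    exact hσ (by rw [hid]; rfl)
  apply hσ
  apply Equiv.ext; intro x
  have := h2 x 0
  simp only [pOp, pInvOp, hρ0, if_pos rfl] at this
  simp [Equiv.Perm.mul_apply]
  have : σ (σ x) = x := by
    have h' := congrArg σ this
    simpa using h'
  exact this
end

section
/- Let σ be a non-trivial involution on {1,...,n}. An involution ρ on P_n^σ is a good involution if and only if ρ(0) = 0 and the restriction of ρ to {1,...,n} commutes with σ. -/
/-- For a non-trivial involution `σ`, an involution `ρ` on `P_n^σ` is good iff
`ρ 0 = 0` and `ρ` restricted to `{1,...,n}` commutes with `σ`. -/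
theorem good_involution_iff {n : ℕ} (σ : Equiv.Perm (Fin (n + 1)))
    (hσ0 : σ 0 = 0) (hσ : σ ≠ 1) (hσ2 : σ * σ = 1)
    (ρ : Fin (n + 1) → Fin (n + 1)) (hρ : Function.Involutive ρ) :
    ((∀ x y, ρ (pOp σ x y) = pOp σ (ρ x) y) ∧
        (∀ x y, pOp σ x (ρ y) = pInvOp σ x y)) ↔
    (ρ 0 = 0 ∧ ∀ x : Fin (n + 1), x ≠ 0 → ρ (σ x) = σ (ρ x)) := by
  have hinv : σ⁻¹ = σ := by
    exact (inv_eq_of_mul_eq_one_right hσ2).symm ▸ rfl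
  constructor
  · rintro ⟨h1, h2⟩
    have hρ0 : ρ 0 = 0 := by
      by_contra h
      apply hσ
      ext x
      have := h2 x 0
      simp [pOp, pInvOp, h] at this
      rw [← Equiv.Perm.inv_def, hinv] at this
      simp [← this]
    refine ⟨hρ0, fun x _ => ?_⟩
    have := h1 x 0
    simpa [pOp] using this
  · rintro ⟨hρ0, hcomm⟩
    constructor
    · intro x y
      unfold pOp
      by_cases hy : y = 0 <;> simp [hy]
      by_cases hx : x = 0
      · simp [hx, hσ0, hρ0]
      · exact hcomm x hx
    · intro x y
      unfold pOp pInvOp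
      by_cases hy : y = 0
      · simp [hy, hρ0, hinv]
      · have : ρ y ≠ 0 := fun h => hy (by rw [← hρ y, h, hρ0])
        simp [hy, this]
end

section
/- Let g be a permutation of {1,...,n} commuting with σ. Then the extension g₀: P_n^σ → P_n^σ with g₀(0) = 0 and g₀(x) = g(x) for x ≠ 0 is a quandle automorphism, and every automorphism of P_n^σ (for σ ≠ id) arises this way. -/
/-- For `σ ≠ id`, a permutation `f` of `{0,...,n}` is a quandle automorphism of
`P_n^σ` iff it fixes `0` and commutes with `σ`: i.e. the extensions `g₀` of elements
`g` of `C_{S_n}(σ)` are automorphisms and every automorphism arises this way. -/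
theorem aut_iff_centralizer_extension {n : ℕ} (σ : Equiv.Perm (Fin (n + 1)))
    (hσ0 : σ 0 = 0) (hσ : σ ≠ 1) (f : Equiv.Perm (Fin (n + 1))) :
    (∀ x y, f (pOp σ x y) = pOp σ (f x) (f y)) ↔
    (f 0 = 0 ∧ f * σ = σ * f) := by
  constructor
  · intro h
    have hf0 : f 0 = 0 := by
      by_contra hne
      have : ∀ x, f (σ x) = f x := by
        intro x
        have := h x 0
        simpa [pOp, hne] using this
      have : σ = 1 := by
        apply Equiv.ext
        intro x
        have := f.injective (this x)
        simpa using this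
      exact hσ this
    refine ⟨hf0, ?_⟩
    apply Equiv.ext
    intro x
    have := h x 0
    simp only [pOp, if_pos rfl, hf0] at this
    simpa [Equiv.Perm.mul_apply] using this
  · rintro ⟨hf0, hcomm⟩ x y
    by_cases hy : y = 0
    · subst hy
      have hfy : f 0 = 0 := hf0
      have := congrArg (fun g => g x) hcomm
      simp only [Equiv.Perm.mul_apply] at this
      simp [pOp, hfy, this]
    · have hfy : f y ≠ 0 := fun h => hy (f.injective (h.trans hf0.symm))
      simp [pOp, hy, hfy]
end
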